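/- Let φ : ℝ → [0, +∞] be a lower semicontinuous convex function with φ(1) = 0 whose domain equals (0, +∞) or [0, +∞), let p ∈ M₁ with p_i > 0 for all i, and let ε > 0. Define ψ : [0, +∞) × ℝ → ℝ ∪ {+∞} by ψ(λ, t) = λ φ*(t/λ) for λ > 0, and ψ(0, t) = 0 if t ≤ 0, ψ(0, t) = +∞ if t > 0. Then for every x ∈ ℝ^N, sup{ ⟨q, x⟩ : q ∈ M₁, D_φ(q, p) ≤ ε } = min over λ ≥ 0 and μ ∈ ℝ of ( λ ε + μ + Σ_{i=1}^N p_i ψ(λ, x_i − μ) ), and the minimum over (λ, μ) on the right-hand side is attained. -/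

import Mathlib

open scoped BigOperators
open Classical

/-- Fenchel conjugate of `φ : ℝ → [0,+∞]`: `φ*(s) = sup_t (s·t − φ(t))`, in `EReal`. -/
noncomputable def fconj (φ : ℝ → EReal) (s : ℝ) : EReal :=
  ⨆ t : ℝ, (((s * t : ℝ)) : EReal) - φ t

/-- `ψ(λ, t) = λ φ*(t/λ)` for `λ > 0`, and `ψ(0, t) = 0` if `t ≤ 0`, `+∞` if `t > 0`. -/
noncomputable def psiPersp (φ : ℝ → EReal) (l t : ℝ) : EReal :=
  if 0 < l then ((l : ℝ) : EReal) * fconj φ (t / l)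
  else if t ≤ 0 then 0 else ⊤

/-- `φ`-divergence `D_φ(q, p) = Σ_i p_i φ(q_i / p_i)`, in `[0,+∞]` (as `EReal`). -/
noncomputable def phiDiv {N : ℕ} (φ : ℝ → EReal) (q p : Fin N → ℝ) : EReal :=
  ∑ i, ((p i : ℝ) : EReal) * φ (q i / p i)

lemma ereal_coe_sum {N : ℕ} (f : Fin N → ℝ) :
    ((∑ i, f i : ℝ) : EReal) = ∑ i, ((f i : ℝ) : EReal) :=
  map_sum (⟨⟨(fun r : ℝ => (r : EReal)), EReal.coe_zero⟩, fun a b => EReal.coe_add a b⟩ : ℝ →+ EReal) f Finset.univ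

lemma ereal_mul_mono {c : ℝ} (hc : 0 < c) {X Y : EReal} (h : X ≤ Y) :
    (c : EReal) * X ≤ (c : EReal) * Y := by
  induction X using EReal.rec with
  | bot => rw [EReal.coe_mul_bot_of_pos hc]; exact bot_le
  | coe a =>
    induction Y using EReal.rec with
    | bot => exact absurd h (by simp)
    | coe b =>
      rw [← EReal.coe_mul, ← EReal.coe_mul, EReal.coe_le_coe_iff]
      exact mul_le_mul_of_nonneg_left (EReal.coe_le_coe_iff.1 h) hc.le
    | top => rw [EReal.coe_mul_top_of_pos hc]; exact le_top
  | top =>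
    have : Y = ⊤ := top_le_iff.1 h
    subst this; exact le_rfl

lemma ereal_lt_of_mul_lt {c : ℝ} (hc : 0 < c) {X Y : EReal}
    (h : (c : EReal) * X < (c : EReal) * Y) : X < Y := by
  by_contra hle
  exact absurd (ereal_mul_mono hc (not_lt.1 hle)) (not_le.2 h)

lemma ereal_pos_mul_ne_bot {c : ℝ} (hc : 0 < c) {X : EReal} (hX : X ≠ ⊥) :
    (c : EReal) * X ≠ ⊥ := by
  induction X using EReal.rec with
  | bot => exact absurd rfl hX
  | coe a => rw [← EReal.coe_mul]; exact EReal.coe_ne_bot _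
  | top => rw [EReal.coe_mul_top_of_pos hc]; exact (by simp : (⊤:EReal) ≠ ⊥)

lemma ereal_sum_le_coe_of_forall_lt {N : ℕ} (a : Fin N → EReal) (ha : ∀ i, a i ≠ ⊥) (B : ℝ)
    (h : ∀ b : Fin N → ℝ, (∀ i, (b i : EReal) < a i) → ∑ i, b i ≤ B) :
    ∑ i, a i ≤ (B : EReal) := by
  -- first get some real family strictly below a
  have hex : ∀ i, ∃ r : ℝ, (r : EReal) < a i := by
    intro i
    rcases EReal.exists_between_coe_real (Ne.bot_lt (ha i)) with ⟨r, _, hr⟩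
    exact ⟨r, hr⟩
  choose b0 hb0 using hex
  -- no a i is ⊤
  have htop : ∀ i, a i ≠ ⊤ := by
    intro j hj
    -- bump b0 at j
    have hbig : ∀ n : ℝ, (∑ i, b0 i) + n ≤ B := by
      intro n
      rcases le_or_gt n 0 with hn | hn
      · calc (∑ i, b0 i) + n ≤ ∑ i, b0 i := by linarith
          _ ≤ B := h b0 hb0
      · have hlt : ∀ i, ((Function.update b0 j (b0 j + n) i : ℝ) : EReal) < a i := by
          intro i
          by_cases hij : i = j
          · subst hij; rw [Function.update_self, hj]; exact EReal.coe_lt_top _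
          · rw [Function.update_of_ne hij]; exact hb0 i
        have hsum2 := h _ hlt
        have hsplit : ∑ i, Function.update b0 j (b0 j + n) i = (∑ i, b0 i) + n := by
          rw [Finset.sum_update_of_mem (Finset.mem_univ j)]
          rw [← Finset.add_sum_erase Finset.univ b0 (Finset.mem_univ j)]
          rw [Finset.sdiff_singleton_eq_erase]
          ring
        rw [hsplit] at hsum2
        exact hsum2
    have := hbig (B - (∑ i, b0 i) + 1)
    linarith
  -- now all real
  have hreal : ∀ i, a i = ((a i).toReal : EReal) := fun i => (EReal.coe_toReal (htop i) (ha i)).symm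
  have hsum : ∀ δ : ℝ, 0 < δ → (∑ i, (a i).toReal) - N * δ ≤ B := by
    intro δ hδ
    have := h (fun i => (a i).toReal - δ) (by
      intro i
      exact lt_of_lt_of_le (EReal.coe_lt_coe_iff.2 (by linarith))
        (le_of_eq (hreal i).symm))
    calc (∑ i, (a i).toReal) - N * δ = ∑ i, ((a i).toReal - δ) := by
          rw [Finset.sum_sub_distrib]; simp [Finset.card_univ, mul_comm]
      _ ≤ B := this
  have hfin : (∑ i, (a i).toReal) ≤ B := by
    by_contra hc
    push_neg at hc
    rcases Nat.eq_zero_or_pos N with h0 | hNpos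
    · subst h0; simp at hc; have := hsum 1 one_pos; simp at this; linarith
    · have hN' : (0:ℝ) < N := by exact_mod_cast hNpos
      have := hsum (((∑ i, (a i).toReal) - B) / (2 * N)) (div_pos (by linarith) (by positivity))
      have : (∑ i, (a i).toReal) - B ≤ N * (((∑ i, (a i).toReal) - B) / (2 * N)) := by linarith
      rw [mul_div_assoc'] at this
      have h2 : (N:ℝ) * ((∑ i, (a i).toReal) - B) / (2 * N) = ((∑ i, (a i).toReal) - B)/2 := by
        field_simp
      rw [h2] at this
      linarith
  calc ∑ i, a i = ((∑ i, (a i).toReal : ℝ) : EReal) := by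
        rw [ereal_coe_sum]; exact Finset.sum_congr rfl fun i _ => (hreal i)
    _ ≤ (B : EReal) := EReal.coe_le_coe_iff.2 hfin

section Phi
variable {N : ℕ} (φ : ℝ → EReal)

lemma phi_ne_bot (hφpos : ∀ t, 0 ≤ φ t) (t : ℝ) : φ t ≠ ⊥ :=
  ((lt_of_lt_of_le (by simp : (⊥ : EReal) < 0) (hφpos t))).ne'

lemma phi_fin (hφdom : {t : ℝ | φ t ≠ ⊤} = Set.Ioi (0 : ℝ) ∨ {t : ℝ | φ t ≠ ⊤} = Set.Ici (0 : ℝ))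
    {t : ℝ} (ht : 0 < t) : φ t ≠ ⊤ := by
  rcases hφdom with hd | hd
  · have : t ∈ {t : ℝ | φ t ≠ ⊤} := by rw [hd]; exact ht
    exact this
  · have : t ∈ {t : ℝ | φ t ≠ ⊤} := by rw [hd]; exact ht.le
    exact this

lemma phi_neg_top (hφdom : {t : ℝ | φ t ≠ ⊤} = Set.Ioi (0 : ℝ) ∨ {t : ℝ | φ t ≠ ⊤} = Set.Ici (0 : ℝ))
    {t : ℝ} (ht : t < 0) : φ t = ⊤ := by
  by_contra h
  have hmem : t ∈ {t : ℝ | φ t ≠ ⊤} := h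
  rcases hφdom with hd | hd
  · rw [hd] at hmem; exact absurd hmem (by simp [Set.mem_Ioi]; linarith)
  · rw [hd] at hmem; exact absurd hmem (by simp [Set.mem_Ici]; linarith)

lemma phi_coe (hφpos : ∀ t, 0 ≤ φ t) {t : ℝ} (ht : φ t ≠ ⊤) :
    φ t = ((φ t).toReal : EReal) := (EReal.coe_toReal ht (phi_ne_bot φ hφpos t)).symm

lemma phi_toReal_nonneg (hφpos : ∀ t, 0 ≤ φ t) {t : ℝ} (ht : φ t ≠ ⊤) :
    0 ≤ (φ t).toReal := by
  have h := hφpos t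
  rw [phi_coe φ hφpos ht] at h
  exact_mod_cast h

lemma phiDiv_real (hφpos : ∀ t, 0 ≤ φ t) (q p : Fin N → ℝ)
    (hppos : ∀ i, 0 < p i) {d : ℝ} (hle : phiDiv φ q p ≤ (d : EReal)) :
    (∀ i, φ (q i / p i) ≠ ⊤) ∧
    phiDiv φ q p = ((∑ i, p i * (φ (q i / p i)).toReal : ℝ) : EReal) ∧
    (∑ i, p i * (φ (q i / p i)).toReal) ≤ d := by
  have hterm : ∀ i : Fin N, (0 : EReal) ≤ ((p i : ℝ) : EReal) * φ (q i / p i) := by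
    intro i
    have := ereal_mul_mono (hppos i) (hφpos (q i / p i))
    rwa [mul_zero] at this
  have hterm_le : ∀ i : Fin N, ((p i : ℝ) : EReal) * φ (q i / p i) ≤ (d : EReal) := by
    intro i
    exact le_trans (Finset.single_le_sum (fun j _ => hterm j) (Finset.mem_univ i)) hle
  have htop : ∀ i : Fin N, φ (q i / p i) ≠ ⊤ := by
    intro i h
    have := hterm_le i
    rw [h, EReal.coe_mul_top_of_pos (hppos i)] at this
    exact absurd this (by simp)
  have hdiv : phiDiv φ q p = ((∑ i, p i * (φ (q i / p i)).toReal : ℝ) : EReal) := by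
    rw [ereal_coe_sum]
    refine Finset.sum_congr rfl fun i _ => ?_
    rw [phi_coe φ hφpos (htop i), ← EReal.coe_mul]
    norm_num
  refine ⟨htop, hdiv, ?_⟩
  rw [hdiv] at hle
  exact EReal.coe_le_coe_iff.1 hle

lemma phi_near (hφpos : ∀ t, 0 ≤ φ t)
    (hφconv : ∀ t₁ t₂ : ℝ, ∀ u : ℝ, 0 < u → u < 1 →
      φ (u * t₁ + (1 - u) * t₂) ≤ (u : EReal) * φ t₁ + ((1 - u : ℝ) : EReal) * φ t₂)
    (hφdom : {t : ℝ | φ t ≠ ⊤} = Set.Ioi (0 : ℝ) ∨ {t : ℝ | φ t ≠ ⊤} = Set.Ici (0 : ℝ))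
    (hφ1 : φ 1 = 0) (M : ℝ)
    (hM : max ((φ (1/2)).toReal) ((φ (3/2)).toReal) ≤ M) :
    ∀ w : ℝ, |w| ≤ 1/2 → φ (1 + w) ≤ ((2 * |w| * M : ℝ) : EReal) := by
  have h2 : φ (3/2) = ((φ (3/2)).toReal : EReal) := phi_coe φ hφpos (phi_fin φ hφdom (by norm_num))
  have h12 : φ (1/2) = ((φ (1/2)).toReal : EReal) := phi_coe φ hφpos (phi_fin φ hφdom (by norm_num))
  intro w hw
  rcases lt_trichotomy w 0 with hwn | hw0 | hwp
  · -- w < 0 : 1 + w = u * (1/2) + (1-u) * 1 with u = -2w = 2|w|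
    have habs : |w| = -w := abs_of_neg hwn
    rcases eq_or_lt_of_le hw with hhalf | hlt
    · -- |w| = 1/2, w = -1/2
      have hw' : w = -(1/2) := by rw [habs] at hhalf; linarith
      subst hw'
      rw [habs]
      norm_num
      rw [h12]
      refine le_trans (le_of_eq rfl) ?_
      exact EReal.coe_le_coe_iff.2 (le_trans (le_max_left _ _) hM)
    · have hu1 : -2*w < 1 := by rw [habs] at hlt; linarith
      have hu0 : 0 < -2*w := by linarith
      have harg : (-2*w) * (1/2) + (1 - (-2*w)) * 1 = 1 + w := by ring
      have := hφconv (1/2) 1 (-2*w) hu0 hu1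
      rw [harg, hφ1, mul_zero, add_zero, h12, ← EReal.coe_mul] at this
      refine le_trans this (EReal.coe_le_coe_iff.2 ?_)
      have h0 : 0 ≤ (φ (1/2)).toReal := phi_toReal_nonneg φ hφpos (phi_fin φ hφdom (by norm_num))
      have hle : (φ (1/2)).toReal ≤ M := le_trans (le_max_left _ _) hM
      rw [habs]
      nlinarith
  · subst hw0
    simp [hφ1]
  · have habs : |w| = w := abs_of_pos hwp
    rcases eq_or_lt_of_le hw with hhalf | hlt
    · have hw' : w = 1/2 := by rw [habs] at hhalf; linarith
      subst hw'
      rw [habs]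
      norm_num
      rw [h2]
      exact EReal.coe_le_coe_iff.2 (by
        have := le_trans (le_max_right _ _) hM
        linarith)
    · have hu1 : 2*w < 1 := by rw [habs] at hlt; linarith
      have hu0 : 0 < 2*w := by linarith
      have harg : (2*w) * (3/2) + (1 - 2*w) * 1 = 1 + w := by ring
      have := hφconv (3/2) 1 (2*w) hu0 hu1
      rw [harg, hφ1, mul_zero, add_zero, h2, ← EReal.coe_mul] at this
      refine le_trans this (EReal.coe_le_coe_iff.2 ?_)
      have h0 : 0 ≤ (φ (3/2)).toReal := phi_toReal_nonneg φ hφpos (phi_fin φ hφdom (by norm_num))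
      have hle : (φ (3/2)).toReal ≤ M := le_trans (le_max_right _ _) hM
      rw [habs]
      nlinarith

end Phi

lemma weak_duality {N : ℕ} (φ : ℝ → EReal) (hφpos : ∀ t, 0 ≤ φ t)
    (p q : Fin N → ℝ) (hppos : ∀ i, 0 < p i)
    (hq0 : ∀ i, 0 ≤ q i) (hq1 : ∑ i, q i = 1) {ε : ℝ} (hqD : phiDiv φ q p ≤ (ε : EReal))
    (l μ : ℝ) (hl : 0 ≤ l) (x : Fin N → ℝ) :
    ((∑ i, q i * x i : ℝ) : EReal) ≤
      ((l * ε + μ : ℝ) : EReal) + ∑ i, ((p i : ℝ) : EReal) * psiPersp φ l (x i - μ) := by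
  rcases eq_or_lt_of_le hl with hl0 | hlpos
  · -- l = 0
    subst hl0
    have hψ0 : ∀ t : ℝ, psiPersp φ 0 t = if t ≤ 0 then 0 else ⊤ := by
      intro t
      simp only [psiPersp]
      rw [if_neg (lt_irrefl (0:ℝ))]
    by_cases hall : ∀ i, x i ≤ μ
    · have hpsi : ∀ i : Fin N, psiPersp φ 0 (x i - μ) = 0 := by
        intro i
        rw [hψ0, if_pos (by linarith [hall i])]
      have : ∑ i, ((p i : ℝ) : EReal) * psiPersp φ 0 (x i - μ) = 0 := by
        rw [Finset.sum_eq_zero]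
        intro i _
        rw [hpsi i, mul_zero]
      rw [this, add_zero, zero_mul, zero_add, EReal.coe_le_coe_iff]
      calc ∑ i, q i * x i ≤ ∑ i, q i * μ :=
            Finset.sum_le_sum fun i _ => mul_le_mul_of_nonneg_left (hall i) (hq0 i)
        _ = μ := by rw [← Finset.sum_mul, hq1, one_mul]
    · push_neg at hall
      obtain ⟨j, hj⟩ := hall
      have hterm_nonneg : ∀ i : Fin N, (0 : EReal) ≤ ((p i : ℝ) : EReal) * psiPersp φ 0 (x i - μ) := by
        intro i
        have hψ : (0 : EReal) ≤ psiPersp φ 0 (x i - μ) := by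
          rw [hψ0]
          split <;> simp
        have := ereal_mul_mono (hppos i) hψ
        rwa [mul_zero] at this
      have hj_top : ((p j : ℝ) : EReal) * psiPersp φ 0 (x j - μ) = ⊤ := by
        have : psiPersp φ 0 (x j - μ) = ⊤ := by
          rw [hψ0, if_neg (by linarith)]
        rw [this, EReal.coe_mul_top_of_pos (hppos j)]
      have hsum_top : ∑ i, ((p i : ℝ) : EReal) * psiPersp φ 0 (x i - μ) = ⊤ := by
        refine top_le_iff.1 ?_
        rw [← hj_top]
        exact Finset.single_le_sum (fun i _ => hterm_nonneg i) (Finset.mem_univ j)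
      rw [hsum_top, EReal.coe_add_top]
      exact le_top
  · -- l > 0
    obtain ⟨htop, hdiv, hdr⟩ := phiDiv_real φ hφpos q p hppos hqD
    have key : ∀ i : Fin N,
        ((q i * (x i - μ) - l * (p i * (φ (q i / p i)).toReal) : ℝ) : EReal) ≤
        ((p i : ℝ) : EReal) * psiPersp φ l (x i - μ) := by
      intro i
      set c := (φ (q i / p i)).toReal with hc
      have h1 : ((((x i - μ)/l) * (q i / p i) - (φ (q i / p i)).toReal : ℝ) : EReal) ≤
          fconj φ ((x i - μ) / l) := by
        have hle := le_iSup (fun t : ℝ => ((((x i - μ)/l * t : ℝ)) : EReal) - φ t) (q i / p i)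
        rw [phi_coe φ hφpos (htop i)] at hle
        rw [EReal.coe_sub]
        exact hle
      have h2 := ereal_mul_mono hlpos h1
      have h3 := ereal_mul_mono (hppos i) h2
      rw [← EReal.coe_mul, ← EReal.coe_mul] at h3
      have heq : p i * (l * (((x i - μ)/l) * (q i / p i) - c))
          = q i * (x i - μ) - l * (p i * c) := by
        have hpne : p i ≠ 0 := (hppos i).ne'
        have hlne : l ≠ 0 := hlpos.ne'
        field_simp
      rw [heq] at h3
      have hψ : psiPersp φ l (x i - μ) = ((l : ℝ) : EReal) * fconj φ ((x i - μ)/l) := by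
        simp only [psiPersp, if_pos hlpos]
      rw [hψ]
      exact h3
    have hsum : ((∑ i, (q i * (x i - μ) - l * (p i * (φ (q i / p i)).toReal)) : ℝ) : EReal) ≤
        ∑ i, ((p i : ℝ) : EReal) * psiPersp φ l (x i - μ) := by
      rw [ereal_coe_sum]
      exact Finset.sum_le_sum fun i _ => key i
    have hreal : ∑ i, (q i * (x i - μ) - l * (p i * (φ (q i / p i)).toReal))
        = (∑ i, q i * x i) - μ - l * (∑ i, p i * (φ (q i / p i)).toReal) := by
      rw [Finset.sum_sub_distrib, ← Finset.mul_sum]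
      congr 1
      simp only [mul_sub]
      rw [Finset.sum_sub_distrib, ← Finset.sum_mul, hq1, one_mul]
    calc ((∑ i, q i * x i : ℝ) : EReal)
        ≤ ((l * ε + μ : ℝ) : EReal) +
            ((∑ i, (q i * (x i - μ) - l * (p i * (φ (q i / p i)).toReal)) : ℝ) : EReal) := by
          rw [← EReal.coe_add, EReal.coe_le_coe_iff, hreal]
          have : l * (∑ i, p i * (φ (q i / p i)).toReal) ≤ l * ε :=
            mul_le_mul_of_nonneg_left hdr hl
          linarith
      _ ≤ ((l * ε + μ : ℝ) : EReal) + ∑ i, ((p i : ℝ) : EReal) * psiPersp φ l (x i - μ) :=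
          add_le_add_right hsum _


set_option maxHeartbeats 1000000

/-- for a lsc convex `φ : ℝ → [0,+∞]` with `φ(1) = 0` whose domain equals
`(0,+∞)` or `[0,+∞)`, `p ∈ M₁` with all `p_i > 0`, and `ε > 0`, for every `x ∈ ℝ^N`:
`sup {⟨q,x⟩ : q ∈ M₁, D_φ(q,p) ≤ ε} = min_{λ ≥ 0, μ} (λε + μ + Σ_i p_i ψ(λ, x_i − μ))`,
the minimum over `(λ, μ)` being attained. -/
theorem stmt_12 {N : ℕ} (hN : 1 ≤ N) (φ : ℝ → EReal)
    (hφpos : ∀ t, 0 ≤ φ t)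
    (hφlsc : LowerSemicontinuous φ)
    (hφconv : ∀ t₁ t₂ : ℝ, ∀ u : ℝ, 0 < u → u < 1 →
      φ (u * t₁ + (1 - u) * t₂) ≤ (u : EReal) * φ t₁ + ((1 - u : ℝ) : EReal) * φ t₂)
    (hφdom : {t : ℝ | φ t ≠ ⊤} = Set.Ioi (0 : ℝ) ∨ {t : ℝ | φ t ≠ ⊤} = Set.Ici (0 : ℝ))
    (hφ1 : φ 1 = 0)
    (p : Fin N → ℝ) (hp : p ∈ stdSimplex ℝ (Fin N)) (hppos : ∀ i, 0 < p i)
    (ε : ℝ) (hε : 0 < ε) (x : Fin N → ℝ) :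
    IsLeast
      {v : EReal | ∃ l : ℝ, 0 ≤ l ∧ ∃ μ : ℝ,
        v = (((l * ε + μ : ℝ)) : EReal) + ∑ i, ((p i : ℝ) : EReal) * psiPersp φ l (x i - μ)}
      (⨆ q ∈ {q ∈ stdSimplex ℝ (Fin N) | phiDiv φ q p ≤ ((ε : ℝ) : EReal)},
        (((∑ i, q i * x i : ℝ)) : EReal)) := by
  classical
  have hNe : Nonempty (Fin N) := ⟨⟨0, Nat.lt_of_lt_of_le Nat.zero_lt_one hN⟩⟩
  set F : Set (Fin N → ℝ) := {q ∈ stdSimplex ℝ (Fin N) | phiDiv φ q p ≤ ((ε : ℝ) : EReal)}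
    with hFdef
  set S : EReal := ⨆ q ∈ F, (((∑ i, q i * x i : ℝ)) : EReal) with hSdef
  have hp0 : ∀ i, 0 ≤ p i := hp.1
  have hp1 : ∑ i, p i = 1 := hp.2
  set px : ℝ := ∑ i, p i * x i with hpx
  -- p is feasible
  have hDpp : phiDiv φ p p = 0 := by
    rw [phiDiv, Finset.sum_eq_zero]
    intro i _
    rw [div_self (hppos i).ne', hφ1, mul_zero]
  have hpF : p ∈ F := by
    refine ⟨hp, ?_⟩
    rw [hDpp]
    exact_mod_cast EReal.coe_le_coe_iff.2 hε.le
  have hSlb : ((px : ℝ) : EReal) ≤ S := le_iSup₂_of_le p hpF le_rfl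
  -- upper bound
  set C₀ : ℝ := Finset.univ.sup' (Finset.univ_nonempty) x with hC₀
  have hSub : S ≤ ((C₀ : ℝ) : EReal) := by
    refine iSup₂_le fun q hq => ?_
    refine EReal.coe_le_coe_iff.2 ?_
    calc ∑ i, q i * x i ≤ ∑ i, q i * C₀ :=
          Finset.sum_le_sum fun i _ =>
            mul_le_mul_of_nonneg_left (Finset.le_sup' x (Finset.mem_univ i)) (hq.1.1 i)
      _ = C₀ := by rw [← Finset.sum_mul, hq.1.2, one_mul]
  have hStop : S ≠ ⊤ := ne_top_of_le_ne_top (EReal.coe_ne_top _) hSub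
  have hSbot : S ≠ ⊥ := fun h => absurd (h ▸ hSlb) (by simp)
  set Sr : ℝ := S.toReal with hSr
  have hScoe : ((Sr : ℝ) : EReal) = S := EReal.coe_toReal hStop hSbot
  have hpxSr : px ≤ Sr := by
    rw [← hScoe] at hSlb
    exact_mod_cast hSlb
  -- lower bound half of IsLeast
  have hlb : ∀ v ∈ {v : EReal | ∃ l : ℝ, 0 ≤ l ∧ ∃ μ : ℝ,
      v = (((l * ε + μ : ℝ)) : EReal) + ∑ i, ((p i : ℝ) : EReal) * psiPersp φ l (x i - μ)},
      S ≤ v := by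
    rintro v ⟨l, hl, μ, rfl⟩
    refine iSup₂_le fun q hq => ?_
    exact weak_duality φ hφpos p q hppos hq.1.1 hq.1.2 hq.2 l μ hl x
  -- the convex set for separation
  set M : ℝ := max ((φ (1/2)).toReal) ((φ (3/2)).toReal) + 1 with hMdef
  have hM1 : 1 ≤ M := by
    have h1 := phi_toReal_nonneg φ hφpos (phi_fin φ hφdom (by norm_num : (0:ℝ) < 1/2))
    have := le_max_left ((φ (1/2)).toReal) ((φ (3/2)).toReal)
    simp only [hMdef]
    linarith
  have hnear : ∀ w : ℝ, |w| ≤ 1/2 → φ (1 + w) ≤ ((2 * |w| * M : ℝ) : EReal) :=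
    phi_near φ hφpos hφconv hφdom hφ1 M (by simp only [hMdef]; linarith)
  set C : Set (ℝ × ℝ × ℝ) := {z | ∃ q : Fin N → ℝ, (∀ i, 0 ≤ q i) ∧
      phiDiv φ q p ≤ ((ε + z.1 : ℝ) : EReal) ∧ (∑ i, q i) = 1 + z.2.1 ∧
      z.2.2 ≤ ∑ i, q i * x i} with hCdef
  have hmem_p : ∀ u v : ℝ, -ε ≤ u → v ≤ px → ((u, 0, v) : ℝ × ℝ × ℝ) ∈ C := by
    intro u v hu hv
    refine ⟨p, hp0, ?_, by simpa using hp1, by simpa using hv⟩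
    rw [hDpp]
    exact_mod_cast EReal.coe_le_coe_iff.2 (by linarith : (0:ℝ) ≤ ε + u)
  -- scaled memberships
  have hmem_w : ∀ u w v : ℝ, |w| ≤ 1/2 → 2 * |w| * M ≤ ε + u → v ≤ (1 + w) * px →
      ((u, w, v) : ℝ × ℝ × ℝ) ∈ C := by
    intro u w v hw hwu hv
    refine ⟨fun i => (1 + w) * p i, ?_, ?_, ?_, ?_⟩
    · intro i
      have : (0:ℝ) < 1 + w := by
        rcases abs_le.1 hw with ⟨h1, _⟩; linarith
      exact mul_nonneg this.le (hp0 i)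
    · have hratio : ∀ i : Fin N, (1 + w) * p i / p i = 1 + w := fun i =>
        mul_div_cancel_right₀ _ (hppos i).ne'
      have : phiDiv φ (fun i => (1 + w) * p i) p ≤ ((2 * |w| * M : ℝ) : EReal) := by
        rw [phiDiv]
        calc ∑ i, ((p i : ℝ) : EReal) * φ ((1 + w) * p i / p i)
            ≤ ∑ i, ((p i : ℝ) : EReal) * ((2 * |w| * M : ℝ) : EReal) :=
              Finset.sum_le_sum fun i _ => by
                rw [hratio i]
                exact ereal_mul_mono (hppos i) (hnear w hw)
          _ = ((∑ i, p i * (2 * |w| * M) : ℝ) : EReal) := by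
              rw [ereal_coe_sum]
              exact Finset.sum_congr rfl fun i _ => by rw [← EReal.coe_mul]
          _ = ((2 * |w| * M : ℝ) : EReal) := by rw [← Finset.sum_mul, hp1, one_mul]
      exact le_trans this (EReal.coe_le_coe_iff.2 hwu)
    · simp only [← Finset.mul_sum, hp1, mul_one]
    · rw [show ∑ i, ((1 + w) * p i) * x i = (1 + w) * px by
        rw [hpx, Finset.mul_sum]; exact Finset.sum_congr rfl fun i _ => by ring]
      exact hv
  have hφconv' : ∀ t₁ t₂ : ℝ, ∀ u : ℝ, 0 ≤ u → u ≤ 1 →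
      φ (u * t₁ + (1 - u) * t₂) ≤ (u : EReal) * φ t₁ + ((1 - u : ℝ) : EReal) * φ t₂ := by
    intro t₁ t₂ u hu0 hu1
    rcases eq_or_lt_of_le hu0 with h0 | h0
    · rw [← h0]
      norm_num
    rcases eq_or_lt_of_le hu1 with h1 | h1
    · rw [h1]
      norm_num
    · exact hφconv _ _ _ h0 h1
  have hCconv : Convex ℝ C := by
    rintro z ⟨q, hq0, hqD, hq1, hqx⟩ z' ⟨q', hq0', hqD', hq1', hqx'⟩ a b ha hb hab
    obtain ⟨htop, hdivq, hdr⟩ := phiDiv_real φ hφpos q p hppos hqD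
    obtain ⟨htop', hdivq', hdr'⟩ := phiDiv_real φ hφpos q' p hppos hqD'
    have hfst : (a • z + b • z').1 = a * z.1 + b * z'.1 := by
      simp [smul_eq_mul]
    have hsnd1 : (a • z + b • z').2.1 = a * z.2.1 + b * z'.2.1 := by
      simp [smul_eq_mul]
    have hsnd2 : (a • z + b • z').2.2 = a * z.2.2 + b * z'.2.2 := by
      simp [smul_eq_mul]
    refine ⟨fun i => a * q i + b * q' i, fun i =>
      add_nonneg (mul_nonneg ha (hq0 i)) (mul_nonneg hb (hq0' i)), ?_, ?_, ?_⟩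
    · -- divergence bound
      have hcomp : ∀ i : Fin N, φ ((a * q i + b * q' i) / p i) ≤
          ((a * (φ (q i / p i)).toReal + b * (φ (q' i / p i)).toReal : ℝ) : EReal) := by
        intro i
        have harg : (a * q i + b * q' i) / p i = a * (q i / p i) + (1 - a) * (q' i / p i) := by
          rw [show (1 : ℝ) - a = b from by linarith]
          rw [add_div, mul_div_assoc, mul_div_assoc]
        have := hφconv' (q i / p i) (q' i / p i) a ha (by linarith)
        rw [← harg] at this
        refine le_trans this ?_
        rw [phi_coe φ hφpos (htop i), phi_coe φ hφpos (htop' i), ← EReal.coe_mul,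
          ← EReal.coe_mul, ← EReal.coe_add]
        rw [show (1 : ℝ) - a = b from by linarith]
        simp [EReal.toReal_coe]
      calc phiDiv φ (fun i => a * q i + b * q' i) p
          ≤ ∑ i, ((p i : ℝ) : EReal) *
              ((a * (φ (q i / p i)).toReal + b * (φ (q' i / p i)).toReal : ℝ) : EReal) :=
            Finset.sum_le_sum fun i _ => ereal_mul_mono (hppos i) (hcomp i)
        _ = ((∑ i, p i * (a * (φ (q i / p i)).toReal + b * (φ (q' i / p i)).toReal) : ℝ) : EReal) := by
            rw [ereal_coe_sum]
            exact Finset.sum_congr rfl fun i _ => by rw [← EReal.coe_mul]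
        _ ≤ ((ε + (a • z + b • z').1 : ℝ) : EReal) := by
            rw [EReal.coe_le_coe_iff, hfst]
            have hexp : ∑ i, p i * (a * (φ (q i / p i)).toReal + b * (φ (q' i / p i)).toReal)
                = a * (∑ i, p i * (φ (q i / p i)).toReal)
                  + b * (∑ i, p i * (φ (q' i / p i)).toReal) := by
              rw [Finset.mul_sum, Finset.mul_sum, ← Finset.sum_add_distrib]
              exact Finset.sum_congr rfl fun i _ => by ring
            rw [hexp]
            have ha1 := mul_le_mul_of_nonneg_left hdr ha
            have hb1 := mul_le_mul_of_nonneg_left hdr' hb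
            nlinarith [ha1, hb1]
    · rw [hsnd1, Finset.sum_add_distrib, ← Finset.mul_sum, ← Finset.mul_sum, hq1, hq1']
      ring_nf
      nlinarith [hab]
    · rw [hsnd2]
      have hexp : ∑ i, (a * q i + b * q' i) * x i
          = a * (∑ i, q i * x i) + b * (∑ i, q' i * x i) := by
        rw [Finset.mul_sum, Finset.mul_sum, ← Finset.sum_add_distrib]
        exact Finset.sum_congr rfl fun i _ => by ring
      rw [hexp]
      exact add_le_add (mul_le_mul_of_nonneg_left hqx ha) (mul_le_mul_of_nonneg_left hqx' hb)
  set z₀ : ℝ × ℝ × ℝ := (ε, 0, px - 1) with hz₀def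
  have hball : ∃ δ : ℝ, 0 < δ ∧ Metric.ball z₀ δ ⊆ C := by
    have hM0 : (0:ℝ) < M := by linarith
    set δ : ℝ := min (min (ε / (2 * M + 1)) (1 / (1 + |px|))) (1/2) with hδdef
    have hδpos : 0 < δ :=
      lt_min (lt_min (by positivity) (by positivity)) (by norm_num)
    have hδ1 : δ * (2 * M + 1) ≤ ε := by
      have h : δ ≤ ε / (2 * M + 1) := le_trans (min_le_left _ _) (min_le_left _ _)
      rw [le_div_iff₀ (by linarith : (0:ℝ) < 2 * M + 1)] at h
      exact h
    have hδ2 : δ * (1 + |px|) ≤ 1 := by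
      have h : δ ≤ 1 / (1 + |px|) := le_trans (min_le_left _ _) (min_le_right _ _)
      rw [le_div_iff₀ (by positivity : (0:ℝ) < 1 + |px|)] at h
      exact h
    have hδ3 : δ ≤ 1/2 := min_le_right _ _
    refine ⟨δ, hδpos, ?_⟩
    rintro ⟨u, w, v⟩ hz
    rw [Metric.mem_ball, Prod.dist_eq, Prod.dist_eq] at hz
    simp only [Real.dist_eq, max_lt_iff] at hz
    obtain ⟨h1, h2, h3⟩ := hz
    rw [sub_zero] at h2
    have hu : ε - δ < u := by
      rcases abs_lt.1 h1 with ⟨ha, hb⟩; linarith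
    have hv : v < px - 1 + δ := by
      rcases abs_lt.1 h3 with ⟨ha, hb⟩; linarith
    refine hmem_w u w v (by linarith) ?_ ?_
    · nlinarith [abs_nonneg w, h2.le, hδ1, hu, hM0]
    · have hwpx : |w * px| ≤ δ * |px| := by
        rw [abs_mul]
        exact mul_le_mul_of_nonneg_right h2.le (abs_nonneg px)
      have := neg_abs_le (w * px)
      have hpxabs := le_abs_self px
      have hpxabs' := neg_abs_le px
      nlinarith
  obtain ⟨δ, hδpos, hballC⟩ := hball
  have hz₀int : z₀ ∈ interior C :=
    interior_maximal hballC Metric.isOpen_ball (Metric.mem_ball_self hδpos)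
  have hx₀ : ((0 : ℝ), (0 : ℝ), Sr) ∉ interior C := by
    intro h
    obtain ⟨δ', hδ'pos, hb⟩ := Metric.mem_nhds_iff.1 (mem_interior_iff_mem_nhds.1 h)
    have hmem : ((0 : ℝ), (0 : ℝ), Sr + δ'/2) ∈ C := by
      apply hb
      rw [Metric.mem_ball, Prod.dist_eq, Prod.dist_eq]
      simp [Real.dist_eq, abs_of_nonneg hδ'pos.le]
      linarith
    obtain ⟨q, hq0, hqD, hq1, hqx⟩ := hmem
    have hqF : q ∈ F := ⟨⟨hq0, by simpa using hq1⟩, by simpa using hqD⟩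
    have : ((∑ i, q i * x i : ℝ) : EReal) ≤ S := le_iSup₂_of_le q hqF le_rfl
    rw [← hScoe, EReal.coe_le_coe_iff] at this
    simp only at hqx
    linarith
  obtain ⟨f, hfs⟩ := geometric_hahn_banach_open_point (hCconv.interior) isOpen_interior hx₀
  set A : ℝ := f (1, 0, 0) with hA
  set B : ℝ := f (0, 1, 0) with hB
  set Cc : ℝ := f (0, 0, 1) with hCc
  have hflin : ∀ z : ℝ × ℝ × ℝ, f z = z.1 * A + z.2.1 * B + z.2.2 * Cc := by
    intro z
    have hz : z = z.1 • ((1:ℝ), (0:ℝ), (0:ℝ)) + z.2.1 • ((0:ℝ), (1:ℝ), (0:ℝ))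
        + z.2.2 • ((0:ℝ), (0:ℝ), (1:ℝ)) := by
      rcases z with ⟨a, b, c⟩
      simp [Prod.ext_iff]
    conv_lhs => rw [hz]
    rw [map_add, map_add, map_smul, map_smul, map_smul]
    simp [smul_eq_mul, hA, hB, hCc]
  have hfx : f ((0:ℝ),(0:ℝ),Sr) = Sr * Cc := by
    rw [hflin]
    norm_num
  have hCle : ∀ z ∈ C, z.1 * A + z.2.1 * B + z.2.2 * Cc ≤ Sr * Cc := by
    intro z hzC
    rw [← hflin z]
    by_contra hgt
    push_neg at hgt
    set D : ℝ := f z - Sr * Cc with hD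
    have hDpos : 0 < D := by simp only [hD]; linarith
    set K : ℝ := |f z₀ - f z| + 1 with hK
    have hKpos : 0 < K := by positivity
    set θ : ℝ := (1/2) * min 1 (D / K) with hθ
    have hθpos : 0 < θ :=
      mul_pos (by norm_num) (lt_min one_pos (div_pos hDpos hKpos))
    have hθ1 : θ < 1 := by
      have h := min_le_left 1 (D / K)
      simp only [hθ]
      nlinarith
    have hmemθ := hCconv.combo_interior_self_mem_interior hz₀int hzC hθpos
      (by linarith : (0:ℝ) ≤ 1 - θ) (by ring)
    have hfθ := hfs _ hmemθ
    rw [map_add, map_smul, map_smul] at hfθ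
    simp only [smul_eq_mul] at hfθ
    rw [hfx] at hfθ
    -- hfθ : θ * f z₀ + (1 - θ) * f z < Sr * Cc
    have hθb : θ ≤ (1/2) * (D / K) := by
      have h := min_le_right 1 (D / K)
      simp only [hθ]
      nlinarith
    have h2 : θ * K ≤ D / 2 := by
      calc θ * K ≤ (1/2) * (D / K) * K := mul_le_mul_of_nonneg_right hθb hKpos.le
        _ = D / 2 := by field_simp
    have h3 : -(θ * |f z₀ - f z|) ≤ θ * (f z₀ - f z) :=
      le_trans (by nlinarith [neg_abs_le (f z₀ - f z), hθpos.le] :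
        -(θ * |f z₀ - f z|) ≤ θ * (f z₀ - f z)) le_rfl
    have h4 : θ * |f z₀ - f z| ≤ θ * K :=
      mul_le_mul_of_nonneg_left (by simp only [hK]; linarith) hθpos.le
    linarith
  -- signs
  have hCc0 : 0 ≤ Cc := by
    by_contra hneg
    push_neg at hneg
    have h1 := hCle _ (hmem_p 0 (min (Sr - 1) px) (by linarith) (min_le_right _ _))
    have h2 : min (Sr - 1) px ≤ Sr - 1 := min_le_left _ _
    have h1' : 0 * A + 0 * B + (min (Sr - 1) px) * Cc ≤ Sr * Cc := h1
    nlinarith [mul_le_mul_of_nonpos_right h2 hneg.le]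
  have hAle : A ≤ 0 := by
    by_contra hpos
    push_neg at hpos
    have hK : ∀ u : ℝ, 0 ≤ u → u * A + (px - 1) * Cc ≤ Sr * Cc := by
      intro u hu
      have h' := hCle _ (hmem_p u (px - 1) (by linarith) (by linarith))
      have h'' : u * A + 0 * B + (px - 1) * Cc ≤ Sr * Cc := h'
      linarith
    have h0 := hK 0 le_rfl
    set K : ℝ := Sr * Cc - (px - 1) * Cc with hKdef
    have hK0 : 0 ≤ K := by nlinarith [h0]
    have := hK ((K + 1)/A) (by positivity)
    rw [div_mul_cancel₀ _ hpos.ne'] at this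
    nlinarith [this]
  have hCcpos : 0 < Cc := by
    rcases eq_or_lt_of_le hCc0 with hCceq | h
    · exfalso
      have hM0 : (0:ℝ) < M := by linarith
      set w₀ : ℝ := min (1/2) (ε/(2*M)) with hw₀def
      have hw₀pos : 0 < w₀ := lt_min (by norm_num) (by positivity)
      have hw₀le : w₀ ≤ 1/2 := min_le_left _ _
      have hw₀ε : 2 * w₀ * M ≤ ε := by
        have h : w₀ ≤ ε / (2*M) := min_le_right _ _
        rw [le_div_iff₀ (by linarith : (0:ℝ) < 2*M)] at h
        nlinarith [h]
      have hmw : ∀ w : ℝ, |w| ≤ w₀ → w * B ≤ 0 := by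
        intro w hw
        have habs : |w| ≤ 1/2 := le_trans hw hw₀le
        have h2M : 2 * |w| * M ≤ ε + 0 := by nlinarith [abs_nonneg w]
        have hmem := hmem_w 0 w ((1+w)*px) habs h2M le_rfl
        have h' : 0 * A + w * B + ((1+w)*px) * Cc ≤ Sr * Cc := hCle _ hmem
        rw [← hCceq] at h'
        linarith
      have hB0 : B = 0 := by
        have h1 := hmw w₀ (by rw [abs_of_pos hw₀pos])
        have h2 := hmw (-w₀) (by rw [abs_neg, abs_of_pos hw₀pos])
        nlinarith
      have hz₀lt := hfs z₀ hz₀int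
      rw [hflin z₀, hflin ((0:ℝ),(0:ℝ),Sr)] at hz₀lt
      have hz' : ε * A + 0 * B + (px - 1) * Cc < 0 * A + 0 * B + Sr * Cc := hz₀lt
      rw [← hCceq] at hz'
      have hAneg : A < 0 := by nlinarith
      have hm' : (-(ε/2)) * A + 0 * B + (px-1) * Cc ≤ Sr * Cc :=
        hCle _ (hmem_p (-(ε/2)) (px-1) (by linarith) (by linarith))
      rw [← hCceq] at hm'
      nlinarith
    · exact h
  set l : ℝ := -A / Cc with hldef
  set μ : ℝ := -B / Cc with hμdef
  have hl0 : 0 ≤ l := div_nonneg (by linarith) hCcpos.le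
  have hstar : ∀ q : Fin N → ℝ, (∀ i, 0 ≤ q i) → ∀ d : ℝ, phiDiv φ q p ≤ ((d : ℝ) : EReal) →
      ∑ i, q i * (x i - μ) ≤ (Sr - μ - l * ε) + l * d := by
    intro q hq0 d hqD
    have hmem : ((d - ε, (∑ i, q i) - 1, ∑ i, q i * x i) : ℝ × ℝ × ℝ) ∈ C := by
      refine ⟨q, hq0, ?_, by ring, le_rfl⟩
      rw [show ε + (d - ε) = d by ring]
      exact hqD
    have hin' := hCle _ hmem
    have hin : (d - ε) * A + ((∑ i, q i) - 1) * B + (∑ i, q i * x i) * Cc ≤ Sr * Cc := hin'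
    have hAeq : A = -(l * Cc) := by
      rw [hldef, div_mul_cancel₀ _ hCcpos.ne']
      ring
    have hBeq : B = -(μ * Cc) := by
      rw [hμdef, div_mul_cancel₀ _ hCcpos.ne']
      ring
    rw [hAeq, hBeq] at hin
    have hsum : ∑ i, q i * (x i - μ) = (∑ i, q i * x i) - μ * (∑ i, q i) := by
      rw [Finset.mul_sum, ← Finset.sum_sub_distrib]
      exact Finset.sum_congr rfl fun i _ => by ring
    rw [hsum, ← mul_le_mul_iff_left₀ hCcpos]
    nlinarith [hin]
  -- step 5
  have hψl : ∀ t : ℝ, 0 < l → psiPersp φ l t = ((l : ℝ) : EReal) * fconj φ (t / l) := by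
    intro t hl
    simp only [psiPersp, if_pos hl]
  have hpsiB : ∑ i, ((p i : ℝ) : EReal) * psiPersp φ l (x i - μ) ≤
      ((Sr - μ - l * ε : ℝ) : EReal) := by
    rcases eq_or_lt_of_le hl0 with hl0' | hlpos
    · -- l = 0
      have hl' : l = 0 := hl0'.symm
      rw [hl']
      -- auxiliary: divergence of positive multiples of p
      have hDcoe : ∀ c : ℝ, 0 < c → phiDiv φ (fun i => c * p i) p
          = (((φ c).toReal : ℝ) : EReal) := by
        intro c hc
        rw [phiDiv]
        calc ∑ i, ((p i : ℝ) : EReal) * φ (c * p i / p i)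
            = ∑ i, ((p i * (φ c).toReal : ℝ) : EReal) := by
              refine Finset.sum_congr rfl fun i _ => ?_
              rw [mul_div_cancel_right₀ _ (hppos i).ne',
                phi_coe φ hφpos (phi_fin φ hφdom hc), ← EReal.coe_mul]
              simp [EReal.toReal_coe]
          _ = ((∑ i, p i * (φ c).toReal : ℝ) : EReal) := (ereal_coe_sum _).symm
          _ = _ := by rw [← Finset.sum_mul, hp1, one_mul]
      -- all x i ≤ μ
      have hall : ∀ i, x i ≤ μ := by
        by_contra hnall
        push_neg at hnall
        obtain ⟨j, hj⟩ := hnall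
        set K : ℝ := ∑ i, p i * (x i - μ) with hKd
        have hbig : ∀ n : ℝ, 0 ≤ n → K + n * (p j * (x j - μ)) ≤ Sr - μ := by
          intro n hn
          set q : Fin N → ℝ := fun i => (1 + (if i = j then n else 0)) * p i with hqdef
          have hq0 : ∀ i, 0 ≤ q i := by
            intro i
            refine mul_nonneg ?_ (hp0 i)
            by_cases hij : i = j <;> simp [hij] <;> linarith
          have hratpos : ∀ i : Fin N, (0:ℝ) < 1 + (if i = j then n else 0) := by
            intro i
            by_cases hij : i = j <;> simp [hij] <;> linarith
          have hfin' : ∀ i : Fin N, φ (q i / p i) ≠ ⊤ := by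
            intro i
            rw [hqdef]
            simp only
            rw [mul_div_cancel_right₀ _ (hppos i).ne']
            exact phi_fin φ hφdom (hratpos i)
          set dq : ℝ := ∑ i, p i * (φ (q i / p i)).toReal with hdq
          have hDq : phiDiv φ q p = ((dq : ℝ) : EReal) := by
            rw [phiDiv, hdq, ereal_coe_sum]
            refine Finset.sum_congr rfl fun i _ => ?_
            rw [phi_coe φ hφpos (hfin' i), ← EReal.coe_mul]
            simp [EReal.toReal_coe]
          have hst := hstar q hq0 dq (le_of_eq hDq)
          rw [hl'] at hst
          have hsplit : ∑ i, q i * (x i - μ) = K + n * (p j * (x j - μ)) := by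
            calc ∑ i, q i * (x i - μ)
                = ∑ i, (p i * (x i - μ) + (if i = j then n * (p i * (x i - μ)) else 0)) := by
                  refine Finset.sum_congr rfl fun i _ => ?_
                  by_cases hij : i = j <;> simp [hqdef, hij] <;> ring
              _ = K + n * (p j * (x j - μ)) := by
                  rw [Finset.sum_add_distrib, Finset.sum_ite_eq' Finset.univ j
                    (fun i => n * (p i * (x i - μ)))]
                  simp [hKd]
          rw [hsplit] at hst
          linarith
        have hc : 0 < p j * (x j - μ) := mul_pos (hppos j) (by linarith)
        have h0 := hbig 0 le_rfl
        rcases le_or_gt 0 ((Sr - μ - K + 1) / (p j * (x j - μ))) with hpos | hneg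
        · have := hbig _ hpos
          rw [div_mul_cancel₀ _ hc.ne'] at this
          linarith
        · rw [div_neg_iff] at hneg
          rcases hneg with ⟨h1, h2⟩ | ⟨h1, h2⟩
          · linarith
          · linarith
      -- 0 ≤ Sr - μ
      have hKneg : (∑ i, p i * (x i - μ)) ≤ 0 :=
        Finset.sum_nonpos fun i _ => mul_nonpos_of_nonneg_of_nonpos (hp0 i) (by linarith [hall i])
      have hscale : ∀ c : ℝ, 0 < c → c * (∑ i, p i * (x i - μ)) ≤ Sr - μ := by
        intro c hc
        have hst := hstar (fun i => c * p i) (fun i => mul_nonneg hc.le (hp0 i))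
          ((φ c).toReal) (le_of_eq (hDcoe c hc))
        rw [hl'] at hst
        have hsplit : ∑ i, (c * p i) * (x i - μ) = c * (∑ i, p i * (x i - μ)) := by
          rw [Finset.mul_sum]
          exact Finset.sum_congr rfl fun i _ => by ring
        rw [hsplit] at hst
        linarith
      have hSrμ : 0 ≤ Sr - μ := by
        by_contra hltc
        push_neg at hltc
        set K2 : ℝ := ∑ i, p i * (x i - μ) with hK2
        rcases eq_or_lt_of_le hKneg with hK0 | hKlt
        · have h := hscale 1 one_pos
          rw [one_mul] at h
          linarith
        · set c : ℝ := (Sr - μ) / (2 * K2) with hcd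
          have hcpos : 0 < c := div_pos_of_neg_of_neg (by linarith) (by linarith)
          have h := hscale c hcpos
          have hgen : ∀ y k : ℝ, k ≠ 0 → y / (2 * k) * k = y / 2 := by
            intro y k hk
            field_simp
          have hCK : c * K2 = (Sr - μ) / 2 := hgen (Sr - μ) K2 (ne_of_lt hKlt)
          linarith
      -- conclude
      have hψ00 : ∀ i : Fin N, psiPersp φ 0 (x i - μ) = 0 := by
        intro i
        simp only [psiPersp]
        rw [if_neg (lt_irrefl (0:ℝ)), if_pos (by linarith [hall i] : x i - μ ≤ 0)]
      rw [Finset.sum_eq_zero fun i _ => by rw [hψ00 i, mul_zero]]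
      exact_mod_cast (by nlinarith : (0:ℝ) ≤ Sr - μ - 0 * ε)
    · -- l > 0
      have hfconj_lb : ∀ s : ℝ, ((s : ℝ) : EReal) ≤ fconj φ s := by
        intro s
        have h := le_iSup (fun t : ℝ => (((s * t : ℝ)) : EReal) - φ t) 1
        rw [hφ1] at h
        simpa [fconj] using h
      have hane : ∀ i : Fin N, ((p i : ℝ) : EReal) * psiPersp φ l (x i - μ) ≠ ⊥ := by
        intro i
        rw [hψl _ hlpos]
        refine ereal_pos_mul_ne_bot (hppos i) (ereal_pos_mul_ne_bot hlpos ?_)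
        intro h
        exact absurd (h ▸ hfconj_lb ((x i - μ)/l)) (by simp)
      refine ereal_sum_le_coe_of_forall_lt _ hane _ ?_
      intro b hb
      have hex : ∀ i : Fin N, ∃ t : ℝ, 0 ≤ t ∧ φ t ≠ ⊤ ∧
          b i < p i * t * (x i - μ) - l * (p i * (φ t).toReal) := by
        intro i
        have hbi := hb i
        rw [hψl _ hlpos, ← mul_assoc, ← EReal.coe_mul] at hbi
        have hpl : 0 < p i * l := mul_pos (hppos i) hlpos
        have hlt : ((b i / (p i * l) : ℝ) : EReal) < fconj φ ((x i - μ)/l) := by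
          by_contra hle
          push_neg at hle
          have h := ereal_mul_mono hpl hle
          rw [← EReal.coe_mul, mul_div_cancel₀ _ hpl.ne'] at h
          exact absurd hbi (not_lt.2 h)
        rw [fconj, lt_iSup_iff] at hlt
        obtain ⟨t, ht⟩ := hlt
        have htop : φ t ≠ ⊤ := by
          intro h
          rw [h, EReal.sub_top] at ht
          exact absurd ht (by simp)
        have ht0 : 0 ≤ t := by
          by_contra hneg
          push_neg at hneg
          exact htop (phi_neg_top φ hφdom hneg)
        refine ⟨t, ht0, htop, ?_⟩
        rw [phi_coe φ hφpos htop, ← EReal.coe_sub, EReal.coe_lt_coe_iff] at ht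
        have h := (div_lt_iff₀ hpl).1 ht
        calc b i < ((x i - μ)/l * t - (φ t).toReal) * (p i * l) := h
          _ = p i * t * (x i - μ) - l * (p i * (φ t).toReal) := by
              field_simp
      choose t ht0 httop htb using hex
      set dd : ℝ := ∑ i, p i * (φ (t i)).toReal with hdd
      have hqD : phiDiv φ (fun i => p i * t i) p = ((dd : ℝ) : EReal) := by
        rw [phiDiv, hdd, ereal_coe_sum]
        refine Finset.sum_congr rfl fun i _ => ?_
        rw [mul_div_cancel_left₀ _ (hppos i).ne', phi_coe φ hφpos (httop i), ← EReal.coe_mul]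
        simp [EReal.toReal_coe]
      have hst := hstar (fun i => p i * t i) (fun i => mul_nonneg (hp0 i) (ht0 i))
        dd (le_of_eq hqD)
      have hsum : ∑ i, b i ≤ ∑ i, (p i * t i * (x i - μ) - l * (p i * (φ (t i)).toReal)) :=
        Finset.sum_le_sum fun i _ => (htb i).le
      have hsep : ∑ i, (p i * t i * (x i - μ) - l * (p i * (φ (t i)).toReal))
          = (∑ i, (p i * t i) * (x i - μ)) - l * dd := by
        rw [hdd, Finset.mul_sum, ← Finset.sum_sub_distrib]
      linarith [hsum, hst, hsep]
  -- assemble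
  have hSmem : S ∈ {v : EReal | ∃ l : ℝ, 0 ≤ l ∧ ∃ μ : ℝ,
      v = (((l * ε + μ : ℝ)) : EReal) + ∑ i, ((p i : ℝ) : EReal) * psiPersp φ l (x i - μ)} := by
    have hvle : (((l * ε + μ : ℝ)) : EReal) + ∑ i, ((p i : ℝ) : EReal) * psiPersp φ l (x i - μ)
        ≤ S := by
      calc _ ≤ (((l * ε + μ : ℝ)) : EReal) + ((Sr - μ - l * ε : ℝ) : EReal) :=
            add_le_add_right hpsiB _
        _ = ((l * ε + μ + (Sr - μ - l * ε) : ℝ) : EReal) := (EReal.coe_add _ _).symm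
        _ = ((Sr : ℝ) : EReal) := by
            rw [show l * ε + μ + (Sr - μ - l * ε) = Sr from by ring]
        _ = S := hScoe
    have hSle : S ≤ (((l * ε + μ : ℝ)) : EReal)
        + ∑ i, ((p i : ℝ) : EReal) * psiPersp φ l (x i - μ) :=
      hlb _ ⟨l, hl0, μ, rfl⟩
    exact ⟨l, hl0, μ, le_antisymm hSle hvle⟩
  exact ⟨hSmem, hlb⟩
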